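/- Let E > 0, m ∈ ℝ, and let b = (b₁,b₂,b₃) ∈ ℝ³ satisfy C₃(b) = (1-b₁²)b₂ - b₁²m² - b₃² = 0, b₂ ≥ 0, b₁² ≤ 1. Suppose u, v ∈ ℝ satisfy √((1-b₁²)b₂) · cos(u - v) = -b₁ m and √((1-b₁²)b₂) · sin(u - v) = b₃. Define P = √(2E)( √(1-b₁²) cos u, √(1-b₁²) sin u, b₁ ) and L = ( √(b₂) cos v, √(b₂) sin v, m ). Then (P,L) lies in the fiber of the reduction map over b: |P|² = 2E, P·L = 0, L₃ = m, P₃/√(2E) = b₁, L₁² + L₂² = b₂, and (L₁P₂ - L₂P₁)/√(2E) = b₃. Moreover the S¹ action increases both u and v by the same angle and leaves u - v invariant, so the fiber over a regular point b is a circle. -/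
import Mathlib


noncomputable section

/-- The dot product in `ℝ³`. -/
def dot3 (v w : Fin 3 → ℝ) : ℝ := v 0 * w 0 + v 1 * w 1 + v 2 * w 2

/-- Reconstruction: given `b = (b₁,b₂,b₃)` on the reduced phase space and angles
`u, v` with `√((1-b₁²)b₂)·cos(u-v) = -b₁m` and `√((1-b₁²)b₂)·sin(u-v) = b₃`, the
point `P = √(2E)(√(1-b₁²)cos u, √(1-b₁²)sin u, b₁)`, `L = (√b₂ cos v, √b₂ sin v, m)`
lies in the fiber of the reduction map over `b`. The `S¹` action shifts `u` and `v`
by the same angle, leaving `u - v` invariant. -/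
theorem reconstruction_fiber (E m : ℝ) (hE : 0 < E) (b₁ b₂ b₃ u v : ℝ)
    (hC : (1 - b₁ ^ 2) * b₂ - b₁ ^ 2 * m ^ 2 - b₃ ^ 2 = 0)
    (hb2 : 0 ≤ b₂) (hb1 : b₁ ^ 2 ≤ 1)
    (hcos : Real.sqrt ((1 - b₁ ^ 2) * b₂) * Real.cos (u - v) = -(b₁ * m))
    (hsin : Real.sqrt ((1 - b₁ ^ 2) * b₂) * Real.sin (u - v) = b₃) :
    let P : Fin 3 → ℝ :=
      ![Real.sqrt (2 * E) * (Real.sqrt (1 - b₁ ^ 2) * Real.cos u),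
        Real.sqrt (2 * E) * (Real.sqrt (1 - b₁ ^ 2) * Real.sin u),
        Real.sqrt (2 * E) * b₁]
    let L : Fin 3 → ℝ := ![Real.sqrt b₂ * Real.cos v, Real.sqrt b₂ * Real.sin v, m]
    dot3 P P = 2 * E ∧ dot3 P L = 0 ∧ L 2 = m ∧
    P 2 / Real.sqrt (2 * E) = b₁ ∧
    (L 0) ^ 2 + (L 1) ^ 2 = b₂ ∧
    (L 0 * P 1 - L 1 * P 0) / Real.sqrt (2 * E) = b₃ ∧
    (∀ φ : ℝ, (u + φ) - (v + φ) = u - v) := by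
  intro P L
  have h1 : (0:ℝ) ≤ 1 - b₁ ^ 2 := by linarith
  have h2E : (0:ℝ) < 2 * E := by linarith
  have hs2E : Real.sqrt (2 * E) ^ 2 = 2 * E := Real.sq_sqrt h2E.le
  have hs1 : Real.sqrt (1 - b₁ ^ 2) ^ 2 = 1 - b₁ ^ 2 := Real.sq_sqrt h1
  have hsb2 : Real.sqrt b₂ ^ 2 = b₂ := Real.sq_sqrt hb2
  have hmul : Real.sqrt (1 - b₁ ^ 2) * Real.sqrt b₂ = Real.sqrt ((1 - b₁ ^ 2) * b₂) :=
    (Real.sqrt_mul h1 b₂).symm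
  have hsne : Real.sqrt (2 * E) ≠ 0 := by positivity
  have hcu := Real.cos_sub u v
  have hsu := Real.sin_sub u v
  have hpyu : Real.sin u ^ 2 + Real.cos u ^ 2 = 1 := Real.sin_sq_add_cos_sq u
  refine ⟨?_, ?_, ?_, ?_, ?_, ?_, fun φ => by ring⟩
  · simp only [P, dot3, Matrix.cons_val_zero, Matrix.cons_val_one, Matrix.head_cons,
      Matrix.cons_val_two, Matrix.tail_cons]
    have e : Real.sqrt (2 * E) * (Real.sqrt (1 - b₁ ^ 2) * Real.cos u) *
        (Real.sqrt (2 * E) * (Real.sqrt (1 - b₁ ^ 2) * Real.cos u)) +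
        Real.sqrt (2 * E) * (Real.sqrt (1 - b₁ ^ 2) * Real.sin u) *
        (Real.sqrt (2 * E) * (Real.sqrt (1 - b₁ ^ 2) * Real.sin u)) +
        Real.sqrt (2 * E) * b₁ * (Real.sqrt (2 * E) * b₁) =
        Real.sqrt (2 * E) ^ 2 * (Real.sqrt (1 - b₁ ^ 2) ^ 2 *
          (Real.sin u ^ 2 + Real.cos u ^ 2) + b₁ ^ 2) := by ring
    rw [e, hs2E, hs1, hpyu]; ring
  · simp only [P, L, dot3, Matrix.cons_val_zero, Matrix.cons_val_one, Matrix.head_cons,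
      Matrix.cons_val_two, Matrix.tail_cons]
    have key : Real.sqrt (1 - b₁ ^ 2) * Real.sqrt b₂ *
        (Real.cos u * Real.cos v + Real.sin u * Real.sin v) = -(b₁ * m) := by
      rw [hmul, ← hcu]; exact hcos
    have e : Real.sqrt (2 * E) * (Real.sqrt (1 - b₁ ^ 2) * Real.cos u) *
        (Real.sqrt b₂ * Real.cos v) + Real.sqrt (2 * E) * (Real.sqrt (1 - b₁ ^ 2) * Real.sin u) *
        (Real.sqrt b₂ * Real.sin v) + Real.sqrt (2 * E) * b₁ * m =
        Real.sqrt (2 * E) * (Real.sqrt (1 - b₁ ^ 2) * Real.sqrt b₂ *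
          (Real.cos u * Real.cos v + Real.sin u * Real.sin v) + b₁ * m) := by ring
    rw [e, key]; ring
  · simp [L]
  · simp only [P, Matrix.cons_val_two, Matrix.tail_cons, Matrix.head_cons]
    field_simp
  · simp only [L, Matrix.cons_val_zero, Matrix.cons_val_one, Matrix.head_cons]
    nlinarith [hsb2, Real.sin_sq_add_cos_sq v]
  · simp only [P, L, Matrix.cons_val_zero, Matrix.cons_val_one, Matrix.head_cons]
    have key : Real.sqrt (1 - b₁ ^ 2) * Real.sqrt b₂ *
        (Real.sin u * Real.cos v - Real.cos u * Real.sin v) = b₃ := by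
      rw [hmul, ← hsu]; exact hsin
    rw [div_eq_iff hsne]
    have e : Real.sqrt b₂ * Real.cos v * (Real.sqrt (2 * E) * (Real.sqrt (1 - b₁ ^ 2) * Real.sin u)) -
        Real.sqrt b₂ * Real.sin v * (Real.sqrt (2 * E) * (Real.sqrt (1 - b₁ ^ 2) * Real.cos u)) =
        Real.sqrt (1 - b₁ ^ 2) * Real.sqrt b₂ *
          (Real.sin u * Real.cos v - Real.cos u * Real.sin v) * Real.sqrt (2 * E) := by ring
    rw [e, key]
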